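/- Let Θ ⊆ ℝ^K be open, let x : Θ → ℂ^N be differentiable on Θ, let σ > 0, and for Φ ∈ ℂ^{L×N} define F(Φ,θ)_{m,n} = (2/σ²)·Re⟨Φ ∂x(θ)/∂θ_m, Φ ∂x(θ)/∂θ_n⟩. Let p be a probability density on Θ that is positive and continuously differentiable, and define the Bayesian information matrix B(Φ)_{m,n} = ∫_Θ F(Φ,θ)_{m,n} p(θ) dθ + J_{m,n}, where J_{m,n} = ∫_Θ (∂ln p(θ)/∂θ_m)(∂ln p(θ)/∂θ_n) p(θ) dθ, assuming all these integrals are finite. If A ∈ ℂ^{M×N} satisfies the tangent plane ε-isometry property at every θ ∈ Θ (with 0 < ε < 1), then for every a ∈ ℝ^K, aᵀ B(√(M/N)(1−ε) I_N) a ≤ aᵀ B(A) a ≤ aᵀ B(√(M/N)(1+ε) I_N) a. -/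

import Mathlib

open scoped BigOperators
open MeasureTheory

/-- Action of an `M × N` complex matrix on `ℂ^N` with Euclidean norms. -/
noncomputable def mulVecE {M N : ℕ} (A : Matrix (Fin M) (Fin N) ℂ)
    (v : EuclideanSpace ℂ (Fin N)) : EuclideanSpace ℂ (Fin M) :=
  WithLp.toLp 2 (fun i => ∑ j, A i j * v j)

/-- Fisher information matrix entry for estimating `θ ∈ ℝ^K` from `Φ x(θ)` in complex AWGN. -/
noncomputable def FIM {K L N : ℕ} (σ : ℝ) (x : (Fin K → ℝ) → EuclideanSpace ℂ (Fin N))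
    (θ : Fin K → ℝ) (Φ : Matrix (Fin L) (Fin N) ℂ) (m n : Fin K) : ℝ :=
  (2 / σ ^ 2) *
    (inner ℂ (mulVecE Φ (fderiv ℝ x θ (Pi.single m 1)))
      (mulVecE Φ (fderiv ℝ x θ (Pi.single n 1))) : ℂ).re

/-- Prior information matrix entry `J_{m,n} = ∫_Θ (∂ ln p/∂θ_m)(∂ ln p/∂θ_n) p dθ`. -/
noncomputable def priorInfo {K : ℕ} (p : (Fin K → ℝ) → ℝ) (Θ : Set (Fin K → ℝ))
    (m n : Fin K) : ℝ :=
  ∫ θ in Θ, (fderiv ℝ (fun t => Real.log (p t)) θ (Pi.single m 1)) *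
    (fderiv ℝ (fun t => Real.log (p t)) θ (Pi.single n 1)) * p θ

/-- Bayesian information matrix entry `B(Φ)_{m,n} = ∫_Θ F(Φ,θ)_{m,n} p(θ) dθ + J_{m,n}`. -/
noncomputable def BIM {K L N : ℕ} (σ : ℝ) (x : (Fin K → ℝ) → EuclideanSpace ℂ (Fin N))
    (p : (Fin K → ℝ) → ℝ) (Θ : Set (Fin K → ℝ)) (Φ : Matrix (Fin L) (Fin N) ℂ)
    (m n : Fin K) : ℝ :=
  (∫ θ in Θ, FIM σ x θ Φ m n * p θ) + priorInfo p Θ m n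



lemma euclid_sum_apply {ι N : ℕ} (f : Fin ι → EuclideanSpace ℂ (Fin N)) (i : Fin N) :
    (∑ k, f k) i = ∑ k, f k i :=
  map_sum (PiLp.projₗ (𝕜 := ℂ) 2 (fun _ : Fin N => ℂ) i) f Finset.univ

lemma mulVecE_sum_smul {M N K : ℕ} (A : Matrix (Fin M) (Fin N) ℂ)
    (a : Fin K → ℝ) (d : Fin K → EuclideanSpace ℂ (Fin N)) :
    mulVecE A (∑ k, a k • d k) = ∑ k, (a k : ℂ) • mulVecE A (d k) := by
  ext i
  have h1 : (mulVecE A (∑ k, a k • d k)) i = ∑ j, A i j * ∑ k, a k • d k j := by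
    simp only [mulVecE, euclid_sum_apply, PiLp.smul_apply]
  rw [h1, euclid_sum_apply]
  simp only [PiLp.smul_apply, mulVecE, smul_eq_mul, Complex.real_smul, Finset.mul_sum]
  rw [Finset.sum_comm]
  exact Finset.sum_congr rfl fun k _ => Finset.sum_congr rfl fun j _ => by ring

lemma mulVecE_smul_one {N : ℕ} (c : ℝ) (v : EuclideanSpace ℂ (Fin N)) :
    mulVecE (((c : ℂ)) • (1 : Matrix (Fin N) (Fin N) ℂ)) v = (c : ℂ) • v := by
  ext i
  simp [mulVecE, Matrix.smul_apply, Matrix.one_apply, mul_comm, Finset.sum_ite_eq,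
    Complex.real_smul, mul_assoc]

lemma mulVecE_one {N : ℕ} (v : EuclideanSpace ℂ (Fin N)) :
    mulVecE (1 : Matrix (Fin N) (Fin N) ℂ) v = v := by
  ext i
  simp [mulVecE, Matrix.one_apply, Finset.sum_ite_eq]

lemma mulVecE_zero {M N : ℕ} (A : Matrix (Fin M) (Fin N) ℂ) :
    mulVecE A (0 : EuclideanSpace ℂ (Fin N)) = 0 := by
  ext i
  show (∑ j, A i j * (0 : EuclideanSpace ℂ (Fin N)) j) = (0 : EuclideanSpace ℂ (Fin M)) i
  simp

lemma quad_eq {K L N : ℕ} (σ : ℝ) (x : (Fin K → ℝ) → EuclideanSpace ℂ (Fin N))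
    (θ : Fin K → ℝ) (Φ : Matrix (Fin L) (Fin N) ℂ) (a : Fin K → ℝ) :
    ∑ m, ∑ n, a m * FIM σ x θ Φ m n * a n =
      (2 / σ ^ 2) * ‖mulVecE Φ (∑ k, a k • fderiv ℝ x θ (Pi.single k 1))‖ ^ 2 := by
  unfold FIM
  set w : Fin K → EuclideanSpace ℂ (Fin L) := fun k => mulVecE Φ (fderiv ℝ x θ (Pi.single k 1))
    with hw
  rw [mulVecE_sum_smul]
  have hn : ‖∑ k, (a k : ℂ) • w k‖ ^ 2
      = (inner ℂ (∑ m, (a m : ℂ) • w m) (∑ n, (a n : ℂ) • w n) : ℂ).re :=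
    (inner_self_eq_norm_sq (𝕜 := ℂ) _).symm
  have hinner : (inner ℂ (∑ m, (a m : ℂ) • w m) (∑ n, (a n : ℂ) • w n) : ℂ)
      = ∑ m, ∑ n, ((a m : ℂ) * (a n : ℂ)) * inner ℂ (w m) (w n) := by
    rw [sum_inner]
    refine Finset.sum_congr rfl fun m _ => ?_
    rw [inner_sum]
    refine Finset.sum_congr rfl fun n _ => ?_
    rw [inner_smul_left, inner_smul_right, Complex.conj_ofReal]
    ring
  rw [hn, hinner, Complex.re_sum, Finset.mul_sum]
  refine Finset.sum_congr rfl fun m _ => ?_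
  rw [Complex.re_sum, Finset.mul_sum]
  refine Finset.sum_congr rfl fun n _ => ?_
  rw [← Complex.ofReal_mul, Complex.re_ofReal_mul]
  ring

lemma FIM_smul_one {K N : ℕ} (σ : ℝ) (x : (Fin K → ℝ) → EuclideanSpace ℂ (Fin N))
    (θ : Fin K → ℝ) (c : ℝ) (m n : Fin K) :
    FIM σ x θ (((c : ℂ)) • (1 : Matrix (Fin N) (Fin N) ℂ)) m n
      = c ^ 2 * FIM σ x θ (1 : Matrix (Fin N) (Fin N) ℂ) m n := by
  unfold FIM
  rw [mulVecE_smul_one, mulVecE_smul_one, mulVecE_one, mulVecE_one, inner_smul_left,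
    inner_smul_right, Complex.conj_ofReal, ← mul_assoc, ← Complex.ofReal_mul,
    Complex.re_ofReal_mul]
  ring

lemma sum_FIM_mul_p {K L N : ℕ} (σ : ℝ) (x : (Fin K → ℝ) → EuclideanSpace ℂ (Fin N))
    (p : (Fin K → ℝ) → ℝ) (Φ : Matrix (Fin L) (Fin N) ℂ) (a : Fin K → ℝ) :
    (fun θ => ∑ m, ∑ n, a m * (FIM σ x θ Φ m n * p θ) * a n)
      = fun θ => (∑ m, ∑ n, a m * FIM σ x θ Φ m n * a n) * p θ := by
  funext θ
  rw [Finset.sum_mul]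
  refine Finset.sum_congr rfl fun m _ => ?_
  rw [Finset.sum_mul]
  exact Finset.sum_congr rfl fun n _ => by ring

lemma sum_FIM_integrable {K L N : ℕ} (σ : ℝ) (x : (Fin K → ℝ) → EuclideanSpace ℂ (Fin N))
    (p : (Fin K → ℝ) → ℝ) (Θ : Set (Fin K → ℝ)) (Φ : Matrix (Fin L) (Fin N) ℂ)
    (a : Fin K → ℝ)
    (hint : ∀ m n : Fin K, IntegrableOn (fun θ => FIM σ x θ Φ m n * p θ) Θ) :
    IntegrableOn (fun θ => (∑ m, ∑ n, a m * FIM σ x θ Φ m n * a n) * p θ) Θ := by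
  rw [← sum_FIM_mul_p]
  refine integrable_finset_sum _ fun m _ => integrable_finset_sum _ fun n _ => ?_
  exact ((hint m n).const_mul (a m)).mul_const (a n)

lemma sum_BIM_eq {K L N : ℕ} (σ : ℝ) (x : (Fin K → ℝ) → EuclideanSpace ℂ (Fin N))
    (p : (Fin K → ℝ) → ℝ) (Θ : Set (Fin K → ℝ)) (Φ : Matrix (Fin L) (Fin N) ℂ)
    (a : Fin K → ℝ)
    (hint : ∀ m n : Fin K, IntegrableOn (fun θ => FIM σ x θ Φ m n * p θ) Θ) :
    ∑ m, ∑ n, a m * BIM σ x p Θ Φ m n * a n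
      = (∫ θ in Θ, (∑ m, ∑ n, a m * FIM σ x θ Φ m n * a n) * p θ)
        + ∑ m, ∑ n, a m * priorInfo p Θ m n * a n := by
  unfold BIM
  have split : ∑ m, ∑ n, a m * ((∫ θ in Θ, FIM σ x θ Φ m n * p θ) + priorInfo p Θ m n) * a n
      = (∑ m, ∑ n, a m * (∫ θ in Θ, FIM σ x θ Φ m n * p θ) * a n)
        + ∑ m, ∑ n, a m * priorInfo p Θ m n * a n := by
    rw [← Finset.sum_add_distrib]
    refine Finset.sum_congr rfl fun m _ => ?_
    rw [← Finset.sum_add_distrib]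
    exact Finset.sum_congr rfl fun n _ => by ring
  rw [split]
  congr 1
  have step1 : ∀ m n : Fin K, a m * (∫ θ in Θ, FIM σ x θ Φ m n * p θ) * a n
      = ∫ θ in Θ, a m * (FIM σ x θ Φ m n * p θ) * a n := by
    intro m n
    have h1 : a m * (∫ θ in Θ, FIM σ x θ Φ m n * p θ) * a n
        = (a m * a n) * ∫ θ in Θ, FIM σ x θ Φ m n * p θ := by ring
    rw [h1, ← integral_const_mul]
    exact integral_congr_ae (Filter.Eventually.of_forall fun θ => by ring)
  calc ∑ m, ∑ n, a m * (∫ θ in Θ, FIM σ x θ Φ m n * p θ) * a n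
      = ∑ m, ∑ n, ∫ θ in Θ, a m * (FIM σ x θ Φ m n * p θ) * a n := by
        exact Finset.sum_congr rfl fun m _ => Finset.sum_congr rfl fun n _ => step1 m n
    _ = ∑ m, ∫ θ in Θ, ∑ n, a m * (FIM σ x θ Φ m n * p θ) * a n := by
        refine Finset.sum_congr rfl fun m _ => ?_
        exact (integral_finset_sum _ fun n _ =>
          ((hint m n).const_mul (a m)).mul_const (a n)).symm
    _ = ∫ θ in Θ, ∑ m, ∑ n, a m * (FIM σ x θ Φ m n * p θ) * a n := by
        exact (integral_finset_sum _ fun m _ => integrable_finset_sum _ fun n _ =>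
          ((hint m n).const_mul (a m)).mul_const (a n)).symm
    _ = ∫ θ in Θ, (∑ m, ∑ n, a m * FIM σ x θ Φ m n * a n) * p θ := by
        rw [sum_FIM_mul_p]

/-- If `A` satisfies the tangent plane `ε`-isometry property at every `θ ∈ Θ`, the Bayesian
information quadratic forms with compressive measurements are sandwiched between those with
all `N` measurements at an SNR penalty of `M/N`. -/
theorem stmt1 {K M N : ℕ} (Θ : Set (Fin K → ℝ)) (hΘ : IsOpen Θ)
    (x : (Fin K → ℝ) → EuclideanSpace ℂ (Fin N))
    (hx : ∀ θ ∈ Θ, DifferentiableAt ℝ x θ) (σ : ℝ) (hσ : 0 < σ)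
    (p : (Fin K → ℝ) → ℝ) (hp_pos : ∀ θ ∈ Θ, 0 < p θ)
    (hp_smooth : ContDiffOn ℝ 1 p Θ) (hp_one : ∫ θ in Θ, p θ = 1)
    (ε : ℝ) (hε0 : 0 < ε) (hε1 : ε < 1)
    (A : Matrix (Fin M) (Fin N) ℂ)
    (hiso : ∀ θ ∈ Θ, ∀ a : Fin K → ℝ,
      (∑ k, a k • fderiv ℝ x θ (Pi.single k 1)) ≠ 0 →
        Real.sqrt ((M : ℝ) / N) * (1 - ε) ≤
            ‖mulVecE A (∑ k, a k • fderiv ℝ x θ (Pi.single k 1))‖ /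
              ‖∑ k, a k • fderiv ℝ x θ (Pi.single k 1)‖ ∧
          ‖mulVecE A (∑ k, a k • fderiv ℝ x θ (Pi.single k 1))‖ /
              ‖∑ k, a k • fderiv ℝ x θ (Pi.single k 1)‖ ≤
            Real.sqrt ((M : ℝ) / N) * (1 + ε))
    -- all the integrals defining the Bayesian information matrices are finite:
    (hintA : ∀ m n : Fin K, IntegrableOn (fun θ => FIM σ x θ A m n * p θ) Θ)
    (hintI : ∀ m n : Fin K,
      IntegrableOn (fun θ => FIM σ x θ (1 : Matrix (Fin N) (Fin N) ℂ) m n * p θ) Θ)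
    (hintJ : ∀ m n : Fin K,
      IntegrableOn (fun θ => (fderiv ℝ (fun t => Real.log (p t)) θ (Pi.single m 1)) *
        (fderiv ℝ (fun t => Real.log (p t)) θ (Pi.single n 1)) * p θ) Θ) :
    ∀ a : Fin K → ℝ,
      (∑ m, ∑ n, a m * BIM σ x p Θ
          (((Real.sqrt ((M : ℝ) / N) * (1 - ε) : ℝ) : ℂ) • (1 : Matrix (Fin N) (Fin N) ℂ)) m n * a n)
        ≤ ∑ m, ∑ n, a m * BIM σ x p Θ A m n * a n ∧
      (∑ m, ∑ n, a m * BIM σ x p Θ A m n * a n)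
        ≤ ∑ m, ∑ n, a m * BIM σ x p Θ
          (((Real.sqrt ((M : ℝ) / N) * (1 + ε) : ℝ) : ℂ) • (1 : Matrix (Fin N) (Fin N) ℂ)) m n * a n := by
  intro a
  set c₁ : ℝ := Real.sqrt ((M : ℝ) / N) * (1 - ε) with hc₁def
  set c₂ : ℝ := Real.sqrt ((M : ℝ) / N) * (1 + ε) with hc₂def
  have hc₁0 : 0 ≤ c₁ := mul_nonneg (Real.sqrt_nonneg _) (by linarith)
  have hc₂0 : 0 ≤ c₂ := mul_nonneg (Real.sqrt_nonneg _) (by linarith)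
  have hintc : ∀ c : ℝ, ∀ m n : Fin K, IntegrableOn
      (fun θ => FIM σ x θ (((c : ℂ)) • (1 : Matrix (Fin N) (Fin N) ℂ)) m n * p θ) Θ := by
    intro c m n
    simp only [FIM_smul_one, mul_assoc]
    exact (hintI m n).const_mul _
  have key : ∀ θ ∈ Θ,
      (∑ m, ∑ n, a m * FIM σ x θ (((c₁ : ℂ)) • (1 : Matrix (Fin N) (Fin N) ℂ)) m n * a n) * p θ
        ≤ (∑ m, ∑ n, a m * FIM σ x θ A m n * a n) * p θ ∧
      (∑ m, ∑ n, a m * FIM σ x θ A m n * a n) * p θ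
        ≤ (∑ m, ∑ n, a m * FIM σ x θ (((c₂ : ℂ)) • (1 : Matrix (Fin N) (Fin N) ℂ)) m n * a n)
            * p θ := by
    intro θ hθ
    have hpθ : 0 ≤ p θ := (hp_pos θ hθ).le
    have hσ2 : 0 ≤ 2 / σ ^ 2 := by positivity
    rw [quad_eq, quad_eq, quad_eq, mulVecE_smul_one, mulVecE_smul_one]
    set v : EuclideanSpace ℂ (Fin N) := ∑ k, a k • fderiv ℝ x θ (Pi.single k 1) with hvdef
    by_cases hv0 : v = 0
    · rw [hv0, mulVecE_zero]
      simp
    · obtain ⟨h1, h2⟩ := hiso θ hθ a hv0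
      have hvnorm : 0 < ‖v‖ := norm_pos_iff.mpr hv0
      have hb1 : c₁ * ‖v‖ ≤ ‖mulVecE A v‖ := (le_div_iff₀ hvnorm).mp h1
      have hb2 : ‖mulVecE A v‖ ≤ c₂ * ‖v‖ := by
        have := (div_le_iff₀ hvnorm).mp h2
        linarith
      have e1 : ‖((c₁ : ℂ)) • v‖ = c₁ * ‖v‖ := by
        rw [norm_smul, Complex.norm_real, Real.norm_eq_abs, abs_of_nonneg hc₁0]
      have e2 : ‖((c₂ : ℂ)) • v‖ = c₂ * ‖v‖ := by
        rw [norm_smul, Complex.norm_real, Real.norm_eq_abs, abs_of_nonneg hc₂0]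
      constructor
      · refine mul_le_mul_of_nonneg_right (mul_le_mul_of_nonneg_left ?_ hσ2) hpθ
        rw [e1]
        exact pow_le_pow_left₀ (by positivity) hb1 2
      · refine mul_le_mul_of_nonneg_right (mul_le_mul_of_nonneg_left ?_ hσ2) hpθ
        rw [e2]
        exact pow_le_pow_left₀ (norm_nonneg _) hb2 2
  have hint1 := sum_FIM_integrable σ x p Θ _ a (hintc c₁)
  have hint2 := sum_FIM_integrable σ x p Θ _ a (hintc c₂)
  have hintA' := sum_FIM_integrable σ x p Θ A a hintA
  constructor
  · rw [sum_BIM_eq σ x p Θ _ a (hintc c₁), sum_BIM_eq σ x p Θ A a hintA]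
    refine add_le_add_left ?_ _
    exact setIntegral_mono_on hint1 hintA' hΘ.measurableSet fun θ hθ => (key θ hθ).1
  · rw [sum_BIM_eq σ x p Θ _ a (hintc c₂), sum_BIM_eq σ x p Θ A a hintA]
    refine add_le_add_left ?_ _
    exact setIntegral_mono_on hintA' hint2 hΘ.measurableSet fun θ hθ => (key θ hθ).2
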